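/- arXiv:1404.5507 — 6 statements merged into one kernel-verified Lean document; each statement's English description precedes it below -/
import Mathlib

section
/- For a finite input alphabet X, finite output alphabet Y, a channel W : X → P(Y), and input distributions p, q on X with the same output distribution W_q = W_p, the conditional information variance satisfies V_{q,W_p} ≤ U_{q,W}, i.e., Σ_{x,y} q(x)W_x(y)[log(W_x(y)/W_p(y)) − D(W_x‖W_p)]² ≤ Σ_{x,y} q(x)W_x(y)[log(W_x(y)/W_q(y)) − I(q,W)]². -/
/-- Variance minimizes the mean squared deviation: for weights summing to 1,
the weighted mean squared deviation around the weighted mean is minimal. -/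
lemma var_shift {Y : Type*} [Fintype Y] (w g : Y → ℝ) (hw : ∑ y, w y = 1) (c : ℝ) :
    ∑ y, w y * (g y - (∑ y', w y' * g y')) ^ 2 ≤ ∑ y, w y * (g y - c) ^ 2 := by
  set D := ∑ y', w y' * g y' with hD
  have h : ∑ y, w y * (g y - c) ^ 2
      = ∑ y, w y * (g y - D) ^ 2 + (D - c) * (∑ y, (2 * (w y * g y) - (c + D) * w y)) := by
    rw [Finset.mul_sum, ← Finset.sum_add_distrib]
    apply Finset.sum_congr rfl
    intro y _
    ring
  have h2 : ∑ y, (2 * (w y * g y) - (c + D) * w y) = 2 * D - (c + D) := by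
    rw [Finset.sum_sub_distrib, ← Finset.mul_sum, ← Finset.mul_sum, hw, ← hD]; ring
  rw [h, h2]
  nlinarith [sq_nonneg (D - c)]

/-- For distributions `p q` on finite `X` with identical output distributions
`W_q = W_p`, the conditional information variance `V_{q,W_p}` is at most the
unconditional information variance `U_{q,W}`. -/
theorem stmt_0 {X Y : Type*} [Fintype X] [Fintype Y]
    (W : X → Y → ℝ) (p q : X → ℝ)
    (hW0 : ∀ x y, 0 ≤ W x y) (hW1 : ∀ x, ∑ y, W x y = 1)
    (hp0 : ∀ x, 0 ≤ p x) (hp1 : ∑ x, p x = 1)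
    (hq0 : ∀ x, 0 ≤ q x) (hq1 : ∑ x, q x = 1)
    (heq : ∀ y, ∑ x, q x * W x y = ∑ x, p x * W x y) :
    (∑ x, ∑ y, q x * W x y *
        (Real.log (W x y / ∑ x', p x' * W x' y)
          - ∑ y', W x y' * Real.log (W x y' / ∑ x', p x' * W x' y')) ^ 2)
      ≤ ∑ x, ∑ y, q x * W x y *
        (Real.log (W x y / ∑ x', q x' * W x' y)
          - ∑ x'', ∑ y', q x'' * W x'' y' *
              Real.log (W x'' y' / ∑ x', q x' * W x' y')) ^ 2 := by
  simp only [← heq]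
  apply Finset.sum_le_sum
  intro x _
  simp only [mul_assoc, ← Finset.mul_sum]
  exact mul_le_mul_of_nonneg_left
    (var_shift (W x) (fun y => Real.log (W x y / ∑ x', q x' * W x' y)) (hW1 x) _) (hq0 x)
end

section
/- Under the hypotheses that W_q = W_p, equality V_{q,W_p} = U_{q,W} holds if and only if D(W_x‖W_p) = I(q,W) for all x with q(x) > 0. -/
theorem aux_stmt1 {X Y : Type*} [Fintype X] [Fintype Y]
    (W : X → Y → ℝ) (q : X → ℝ) (L : X → Y → ℝ)
    (hW1 : ∀ x, ∑ y, W x y = 1) (hq0 : ∀ x, 0 ≤ q x)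
    (D : X → ℝ) (I : ℝ)
    (hD : ∀ x, D x = ∑ y, W x y * L x y)
    (hI : I = ∑ x, ∑ y, q x * W x y * L x y) :
    ((∑ x, ∑ y, q x * W x y * (L x y - D x) ^ 2)
      = ∑ x, ∑ y, q x * W x y * (L x y - I) ^ 2)
    ↔ ∀ x, 0 < q x → D x = I := by
  have key : ∀ x, (∑ y, q x * W x y * (L x y - I) ^ 2)
      - (∑ y, q x * W x y * (L x y - D x) ^ 2) = q x * (D x - I) ^ 2 := by
    intro x
    rw [← Finset.sum_sub_distrib]
    have h1 : ∀ y ∈ Finset.univ, q x * W x y * (L x y - I) ^ 2 - q x * W x y * (L x y - D x) ^ 2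
        = q x * ((D x - I) * (2 * (W x y * L x y)) - ((D x - I) * (I + D x)) * W x y) := by
      intro y _; ring
    have ha : ∑ y, (D x - I) * (2 * (W x y * L x y)) = (D x - I) * (2 * D x) := by
      rw [hD x, Finset.mul_sum, Finset.mul_sum]
    have hb : ∑ y, ((D x - I) * (I + D x)) * W x y = (D x - I) * (I + D x) := by
      rw [← Finset.mul_sum, hW1 x, mul_one]
    rw [Finset.sum_congr rfl h1, ← Finset.mul_sum, Finset.sum_sub_distrib, ha, hb]
    ring
  have hsum : (∑ x, ∑ y, q x * W x y * (L x y - I) ^ 2)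
      - (∑ x, ∑ y, q x * W x y * (L x y - D x) ^ 2) = ∑ x, q x * (D x - I) ^ 2 := by
    rw [← Finset.sum_sub_distrib]
    exact Finset.sum_congr rfl fun x _ => key x
  constructor
  · intro h x hx
    have h0 : ∑ x, q x * (D x - I) ^ 2 = 0 := by rw [← hsum, h]; ring
    have h1 := (Finset.sum_eq_zero_iff_of_nonneg
      (fun x _ => mul_nonneg (hq0 x) (sq_nonneg _))).mp h0 x (Finset.mem_univ x)
    have h2 : (D x - I) ^ 2 = 0 := by
      rcases mul_eq_zero.mp h1 with h' | h'
      · exact absurd h' hx.ne'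
      · exact h'
    have h3 := pow_eq_zero_iff (n := 2) (by norm_num) |>.mp h2
    exact sub_eq_zero.mp h3
  · intro h
    have h0 : ∑ x, q x * (D x - I) ^ 2 = 0 := Finset.sum_eq_zero fun x _ => by
      rcases eq_or_lt_of_le (hq0 x) with hq | hq
      · rw [← hq]; ring
      · rw [h x hq]; ring
    linarith [hsum, h0]

/-- Under `W_q = W_p`, equality `V_{q,W_p} = U_{q,W}` holds iff
`D(W_x‖W_p) = I(q,W)` for all `x` with `q x > 0`. -/
theorem stmt_1 {X Y : Type*} [Fintype X] [Fintype Y]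
    (W : X → Y → ℝ) (p q : X → ℝ)
    (hW0 : ∀ x y, 0 ≤ W x y) (hW1 : ∀ x, ∑ y, W x y = 1)
    (hp0 : ∀ x, 0 ≤ p x) (hp1 : ∑ x, p x = 1)
    (hq0 : ∀ x, 0 ≤ q x) (hq1 : ∑ x, q x = 1)
    (heq : ∀ y, ∑ x, q x * W x y = ∑ x, p x * W x y) :
    ((∑ x, ∑ y, q x * W x y *
        (Real.log (W x y / ∑ x', p x' * W x' y)
          - ∑ y', W x y' * Real.log (W x y' / ∑ x', p x' * W x' y')) ^ 2)
      = ∑ x, ∑ y, q x * W x y *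
        (Real.log (W x y / ∑ x', q x' * W x' y)
          - ∑ x'', ∑ y', q x'' * W x'' y' *
              Real.log (W x'' y' / ∑ x', q x' * W x' y')) ^ 2)
    ↔ ∀ x, 0 < q x →
        (∑ y, W x y * Real.log (W x y / ∑ x', p x' * W x' y))
          = ∑ x'', ∑ y', q x'' * W x'' y' *
              Real.log (W x'' y' / ∑ x', q x' * W x' y') := by
  simp only [heq]
  exact aux_stmt1 W q (fun x y => Real.log (W x y / ∑ x', p x' * W x' y)) hW1 hq0
    (fun x => ∑ y, W x y * Real.log (W x y / ∑ x', p x' * W x' y))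
    (∑ x, ∑ y, q x * W x y * Real.log (W x y / ∑ x', p x' * W x' y))
    (fun _ => rfl) rfl
end

section
/- For the channel W on X = {0,1,e}, Y = {0,1} with W_0(0)=1, W_1(1)=1, W_e(0)=W_e(1)=1/2, and the input distribution p with p(0)=p(1)=1/2, the mutual information satisfies I(p,W) = log 2, while S_{W_p} := min{I(q,W) : q ∈ P(X), W_q = W_p} = 0. -/
/-- For the channel `W` on `X = {0,1,e}`, `Y = {0,1}` with `W_0 = δ_0`,
`W_1 = δ_1`, `W_e` uniform, and `p = (1/2, 1/2, 0)`, one has `I(p,W) = log 2`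
while `S_{W_p} = min{I(q,W) : W_q = W_p} = 0`. -/
theorem stmt_2 :
    let W : Fin 3 → Fin 2 → ℝ := ![![1, 0], ![0, 1], ![1/2, 1/2]]
    let p : Fin 3 → ℝ := ![1/2, 1/2, 0]
    let I : (Fin 3 → ℝ) → ℝ := fun q =>
      ∑ x, ∑ y, q x * W x y * Real.log (W x y / ∑ x', q x' * W x' y)
    I p = Real.log 2 ∧
      IsLeast {r : ℝ | ∃ q : Fin 3 → ℝ, (∀ x, 0 ≤ q x) ∧ (∑ x, q x = 1) ∧
        (∀ y, ∑ x, q x * W x y = ∑ x, p x * W x y) ∧ I q = r} 0 := by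
  intro W p I
  refine ⟨?_, ⟨?_, ?_⟩⟩
  · simp only [I, W, p, Fin.sum_univ_three, Fin.sum_univ_two,
      Matrix.cons_val_zero, Matrix.cons_val_one, Matrix.head_cons,
      Matrix.cons_val_two, Matrix.tail_cons]
    norm_num
    linarith
  · refine ⟨![0, 0, 1], ?_, ?_, ?_, ?_⟩
    · intro x; fin_cases x <;> norm_num
    · simp [Fin.sum_univ_three]
    · intro y; fin_cases y <;>
        simp [W, p, Fin.sum_univ_three]
    · simp only [I, W, Fin.sum_univ_three, Fin.sum_univ_two,
        Matrix.cons_val_zero, Matrix.cons_val_one, Matrix.head_cons,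
        Matrix.cons_val_two, Matrix.tail_cons]
      norm_num
  · rintro r ⟨q, hq0, hsum, hmatch, rfl⟩
    have h0 := hmatch 0
    have h1 := hmatch 1
    simp only [W, p, Fin.sum_univ_three, Matrix.cons_val_zero,
      Matrix.cons_val_one, Matrix.head_cons, Matrix.cons_val_two,
      Matrix.tail_cons] at h0 h1
    simp only [I, W, Fin.sum_univ_three, Fin.sum_univ_two,
      Matrix.cons_val_zero, Matrix.cons_val_one, Matrix.head_cons,
      Matrix.cons_val_two, Matrix.tail_cons]
    have hlog : (0:ℝ) ≤ Real.log 2 := Real.log_nonneg (by norm_num)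
    rw [h0, h1]
    norm_num
    nlinarith [hq0 0, hq0 1, hlog]
end

section
/- Let P and Q be probability distributions on a finite set Y and write Q = Q̂ + Q̃ where Q̂(y) = Q(y)·1[y ∈ T] and Q̃(y) = Q(y)·1[y ∉ T] for a set T ⊆ Y. Then for any α ≥ 0, (1/2)‖P − Q‖₁ ≥ P{P − e^α Q̂ ≥ 0} − e^{−α} − Q(T^c), where P{A ≥ 0} denotes the P-measure of {y : A(y) ≥ 0}. -/
open Finset

/-- Splitting `Q` into its part `Q̂` on `T` and the rest, for any `α ≥ 0`:
`(1/2)‖P − Q‖₁ ≥ P{P − e^α Q̂ ≥ 0} − e^{−α} − Q(Tᶜ)`. -/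
theorem stmt_6 {Y : Type*} [Fintype Y] [DecidableEq Y]
    (P Q : Y → ℝ) (T : Finset Y) (α : ℝ) (hα : 0 ≤ α)
    (hP0 : ∀ y, 0 ≤ P y) (hP1 : ∑ y, P y = 1)
    (hQ0 : ∀ y, 0 ≤ Q y) (hQ1 : ∑ y, Q y = 1) :
    (1 / 2 : ℝ) * ∑ y, |P y - Q y| ≥
      (∑ y ∈ univ.filter
          (fun y => 0 ≤ P y - Real.exp α * (if y ∈ T then Q y else 0)), P y)
        - Real.exp (-α) - ∑ y ∈ Tᶜ, Q y := by
  set S := univ.filter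
      (fun y => 0 ≤ P y - Real.exp α * (if y ∈ T then Q y else 0)) with hS
  -- variational bound
  have hsplit : ∀ f : Y → ℝ, ∑ y, f y = ∑ y ∈ S, f y + ∑ y ∈ Sᶜ, f y := by
    intro f
    rw [add_comm, Finset.sum_compl_add_sum]
  have hzero : ∑ y ∈ S, (P y - Q y) + ∑ y ∈ Sᶜ, (P y - Q y) = 0 := by
    rw [← hsplit]
    simp [Finset.sum_sub_distrib, hP1, hQ1]
  have h1 : 2 * ∑ y ∈ S, (P y - Q y) ≤ ∑ y, |P y - Q y| := by
    have e1 : ∑ y ∈ S, (P y - Q y) ≤ ∑ y ∈ S, |P y - Q y| :=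
      Finset.sum_le_sum fun y _ => le_abs_self _
    have e2 : -∑ y ∈ Sᶜ, (P y - Q y) ≤ ∑ y ∈ Sᶜ, |P y - Q y| := by
      rw [← Finset.sum_neg_distrib]
      exact Finset.sum_le_sum fun y _ => neg_le_abs _
    have := hsplit (fun y => |P y - Q y|)
    nlinarith [e1, e2, hzero, this]
  -- bound on Q(S)
  have hQhat : ∑ y ∈ S, (if y ∈ T then Q y else 0) ≤ Real.exp (-α) := by
    have hb : ∀ y ∈ S, (if y ∈ T then Q y else 0) ≤ Real.exp (-α) * P y := by
      intro y hy
      rw [hS, Finset.mem_filter] at hy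
      have h := hy.2
      have hexp : 0 < Real.exp α := Real.exp_pos α
      rw [Real.exp_neg]
      rw [sub_nonneg] at h
      calc (if y ∈ T then Q y else 0)
          = (Real.exp α)⁻¹ * (Real.exp α * (if y ∈ T then Q y else 0)) := by
            rw [← mul_assoc, inv_mul_cancel₀ hexp.ne', one_mul]
        _ ≤ (Real.exp α)⁻¹ * P y := by
            apply mul_le_mul_of_nonneg_left h (by positivity)
    calc ∑ y ∈ S, (if y ∈ T then Q y else 0)
        ≤ ∑ y ∈ S, Real.exp (-α) * P y := Finset.sum_le_sum hb
      _ = Real.exp (-α) * ∑ y ∈ S, P y := by rw [Finset.mul_sum]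
      _ ≤ Real.exp (-α) * 1 := by
          apply mul_le_mul_of_nonneg_left _ (Real.exp_pos _).le
          rw [← hP1]
          exact Finset.sum_le_sum_of_subset_of_nonneg (Finset.subset_univ S)
            (fun y _ _ => hP0 y)
      _ = Real.exp (-α) := mul_one _
  have hQtil : ∑ y ∈ S, (if y ∈ T then 0 else Q y) ≤ ∑ y ∈ Tᶜ, Q y := by
    calc ∑ y ∈ S, (if y ∈ T then 0 else Q y)
        ≤ ∑ y ∈ univ, (if y ∈ T then 0 else Q y) :=
          Finset.sum_le_sum_of_subset_of_nonneg (Finset.subset_univ S)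
            (fun y _ _ => by split <;> [rfl; exact hQ0 y])
      _ = ∑ y ∈ Tᶜ, Q y := by
          rw [show (fun y => if y ∈ T then (0:ℝ) else Q y)
              = (fun y => if y ∈ Tᶜ then Q y else 0) by
            ext y; by_cases h : y ∈ T <;> simp [h]]
          rw [← Finset.sum_filter]
          apply Finset.sum_congr _ (fun _ _ => rfl)
          ext y; simp
  have hQS : ∑ y ∈ S, Q y ≤ Real.exp (-α) + ∑ y ∈ Tᶜ, Q y := by
    have : ∑ y ∈ S, Q y
        = ∑ y ∈ S, (if y ∈ T then Q y else 0) + ∑ y ∈ S, (if y ∈ T then 0 else Q y) := by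
      rw [← Finset.sum_add_distrib]
      apply Finset.sum_congr rfl
      intro y _; split <;> ring
    linarith
  have hsub : ∑ y ∈ S, (P y - Q y) = ∑ y ∈ S, P y - ∑ y ∈ S, Q y :=
    Finset.sum_sub_distrib _ _
  linarith
end

section
/- Let C_n = {x₁,…,x_M} ⊆ Xⁿ be a resolvability code, B = {i : xᵢ ∈ A_n(δ)} the set of indices of atypical codewords, and δ' = |X|δ. Then for any α ≥ 0, (1/2)‖W_{C_n} − W_p^n‖₁ ≥ (|B|/M)·min_{i∈B} W_{xᵢ}^n(T_{W,δ}(xᵢ)) + Σ_{i∈B^c}(1/M)·W_{xᵢ}^n{W_{xᵢ}^n − e^α M W_p^n ≥ 0} − e^{−α} − W_p^n(T_{W_p,δ'}^c). -/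
open Finset

private lemma sum_union_le_aux {α : Type*} [DecidableEq α] (f : α → ℝ)
    (hf : ∀ a, 0 ≤ f a) (s t : Finset α) :
    ∑ a ∈ s ∪ t, f a ≤ ∑ a ∈ s, f a + ∑ a ∈ t, f a := by
  have h := Finset.sum_union_inter (s₁ := s) (s₂ := t) (f := f)
  have h2 : 0 ≤ ∑ a ∈ s ∩ t, f a := Finset.sum_nonneg fun a _ => hf a
  linarith

private lemma sum_biUnion_le_aux {ι α : Type*} [DecidableEq ι] [DecidableEq α] (f : α → ℝ)
    (hf : ∀ a, 0 ≤ f a) (s : Finset ι) (t : ι → Finset α) :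
    ∑ a ∈ s.biUnion t, f a ≤ ∑ i ∈ s, ∑ a ∈ t i, f a := by
  induction s using Finset.induction_on with
  | empty => simp
  | @insert j s' hj ih =>
    rw [Finset.biUnion_insert, Finset.sum_insert hj]
    exact le_trans (sum_union_le_aux f hf _ _) (by linarith)

/-- Key converse lemma: for a resolvability code `c`, with `B` the set of
indices of atypical codewords and `δ' = |X|δ`, for any `α ≥ 0`,
`(1/2)‖W_C − W_p^n‖₁ ≥ (|B|/M)·minᵢ∈B W_{xᵢ}^n(T_{W,δ}(xᵢ))
  + Σᵢ∈Bᶜ (1/M) W_{xᵢ}^n{W_{xᵢ}^n − e^α M W_p^n ≥ 0} − e^{−α} − W_p^n(T_{W_p,δ'}ᶜ)`. -/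
theorem stmt_8 {X Y : Type*} [Fintype X] [Fintype Y] [DecidableEq X] [DecidableEq Y]
    (W : X → Y → ℝ) (p : X → ℝ)
    (hW0 : ∀ x y, 0 ≤ W x y) (hW1 : ∀ x, ∑ y, W x y = 1)
    (hp0 : ∀ x, 0 ≤ p x) (hp1 : ∑ x, p x = 1)
    (n M : ℕ) (hn : 0 < n) (hM : 0 < M)
    (c : Fin M → Fin n → X) (δ α : ℝ) (hδ : 0 < δ) (hα : 0 ≤ α) :
    let Wp : Y → ℝ := fun y => ∑ x, p x * W x y
    let Px : (Fin n → X) → X → ℝ := fun x a =>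
      ((univ.filter fun k => x k = a).card : ℝ) / n
    let Pxy : (Fin n → X) → (Fin n → Y) → X → Y → ℝ := fun x y a b =>
      ((univ.filter fun k => x k = a ∧ y k = b).card : ℝ) / n
    let Py : (Fin n → Y) → Y → ℝ := fun y b =>
      ((univ.filter fun k => y k = b).card : ℝ) / n
    let Wn : (Fin n → X) → (Fin n → Y) → ℝ := fun x y => ∏ k, W (x k) (y k)
    let Wpn : (Fin n → Y) → ℝ := fun y => ∏ k, Wp (y k)
    let WC : (Fin n → Y) → ℝ := fun y => (1 / M : ℝ) * ∑ i, Wn (c i) y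
    let B : Finset (Fin M) := univ.filter fun i =>
      ∃ b, |(∑ a, Px (c i) a * W a b) - Wp b| > 2 * (Fintype.card X) * δ
    let TW : (Fin n → X) → Finset (Fin n → Y) := fun x => univ.filter fun y =>
      ∀ a b, |Pxy x y a b - Px x a * W a b| ≤ δ ∧ (W a b = 0 → Pxy x y a b = 0)
    let Tp : Finset (Fin n → Y) := univ.filter fun y =>
      ∀ b, |Py y b - Wp b| ≤ (Fintype.card X) * δ
    (1 / 2 : ℝ) * ∑ y, |WC y - Wpn y| ≥
      ((B.card : ℝ) / M) *
        (if h : B.Nonempty then B.inf' h (fun i => ∑ y ∈ TW (c i), Wn (c i) y) else 0)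
      + (∑ i ∈ Bᶜ, (1 / M : ℝ) *
          ∑ y ∈ univ.filter (fun y => 0 ≤ Wn (c i) y - Real.exp α * M * Wpn y),
            Wn (c i) y)
      - Real.exp (-α) - ∑ y ∈ Tpᶜ, Wpn y := by
  intro Wp Px Pxy Py Wn Wpn WC B TW Tp
  classical
  have hM' : (0:ℝ) < M := by exact_mod_cast hM
  -- basic facts
  have hWp0 : ∀ b, 0 ≤ Wp b := fun b =>
    Finset.sum_nonneg fun x _ => mul_nonneg (hp0 x) (hW0 x b)
  have hWp1 : ∑ b, Wp b = 1 := by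
    show ∑ b, ∑ x, p x * W x b = 1
    rw [Finset.sum_comm]
    simp_rw [← Finset.mul_sum, hW1, mul_one]
    exact hp1
  have hkey : ∀ (f : Fin n → Y → ℝ), (∀ k, ∑ b, f k b = 1) →
      ∑ y : Fin n → Y, ∏ k, f k (y k) = 1 := by
    intro f hf
    rw [← Fintype.piFinset_univ, ← Finset.prod_univ_sum]
    simp [hf]
  have hWn0 : ∀ x y, 0 ≤ Wn x y := fun x y =>
    Finset.prod_nonneg fun k _ => hW0 _ _
  have hWpn0 : ∀ y, 0 ≤ Wpn y := fun y =>
    Finset.prod_nonneg fun k _ => hWp0 _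
  have hWn1 : ∀ x, ∑ y, Wn x y = 1 := fun x =>
    hkey (fun k b => W (x k) b) (fun k => hW1 _)
  have hWpn1 : ∑ y, Wpn y = 1 := hkey (fun _ => Wp) (fun _ => hWp1)
  have hWC1 : ∑ y, WC y = 1 := by
    show ∑ y, (1 / M : ℝ) * ∑ i, Wn (c i) y = 1
    rw [← Finset.mul_sum, Finset.sum_comm]
    simp_rw [hWn1]
    rw [Finset.sum_const, nsmul_eq_mul, Finset.card_univ, Fintype.card_fin]
    field_simp
  -- Lemma 2: typical outputs of atypical codewords are atypical
  have hMtoTp : ∀ i ∈ B, ∀ y ∈ TW (c i), y ∈ Tpᶜ := by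
    intro i hi y hy
    have hi' : ∃ b, |(∑ a, Px (c i) a * W a b) - Wp b| > 2 * (Fintype.card X) * δ := by
      simpa [B] using hi
    obtain ⟨b, hb⟩ := hi'
    have hy' : ∀ a b, |Pxy (c i) y a b - Px (c i) a * W a b| ≤ δ ∧
        (W a b = 0 → Pxy (c i) y a b = 0) := by
      simpa [TW] using hy
    rw [Finset.mem_compl]
    simp only [Tp, Finset.mem_filter, Finset.mem_univ, true_and, not_forall, not_le]
    refine ⟨b, ?_⟩
    have hdecomp : Py y b = ∑ a, Pxy (c i) y a b := by
      show ((univ.filter fun k => y k = b).card : ℝ) / n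
          = ∑ a, ((univ.filter fun k => c i k = a ∧ y k = b).card : ℝ) / n
      rw [← Finset.sum_div]
      congr 1
      rw [← Nat.cast_sum]
      congr 1
      rw [Finset.card_eq_sum_card_fiberwise (f := fun k => c i k) (t := univ)
        (fun k _ => Finset.mem_univ _)]
      refine Finset.sum_congr rfl fun a _ => ?_
      congr 1
      ext k
      simp [Finset.mem_filter, and_comm]
    have h1 : |Py y b - ∑ a, Px (c i) a * W a b| ≤ (Fintype.card X) * δ := by
      rw [hdecomp, ← Finset.sum_sub_distrib]
      calc |∑ a, (Pxy (c i) y a b - Px (c i) a * W a b)|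
          ≤ ∑ a, |Pxy (c i) y a b - Px (c i) a * W a b| :=
            Finset.abs_sum_le_sum_abs _ _
        _ ≤ ∑ _a : X, δ := Finset.sum_le_sum fun a _ => (hy' a b).1
        _ = (Fintype.card X) * δ := by
            rw [Finset.sum_const, nsmul_eq_mul, Finset.card_univ]
    have t1 := abs_sub_abs_le_abs_sub ((∑ a, Px (c i) a * W a b) - Wp b) (Py y b - Wp b)
    have t2 : (∑ a, Px (c i) a * W a b) - Wp b - (Py y b - Wp b)
        = -(Py y b - ∑ a, Px (c i) a * W a b) := by ring
    rw [t2, abs_neg] at t1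
    linarith
  -- sets
  set D : Fin M → Finset (Fin n → Y) :=
    fun i => univ.filter (fun y => 0 ≤ Wn (c i) y - Real.exp α * M * Wpn y) with hD
  set S1 : Finset (Fin n → Y) := B.biUnion (fun i => TW (c i)) with hS1
  set S2 : Finset (Fin n → Y) := Bᶜ.biUnion D with hS2
  set S : Finset (Fin n → Y) := S1 ∪ S2 with hS
  -- half-TV bound
  have hsum0 : ∑ y, (WC y - Wpn y) = 0 := by
    rw [Finset.sum_sub_distrib, hWC1, hWpn1]; ring
  have hhalf : ∑ y ∈ S, (WC y - Wpn y) ≤ (1/2) * ∑ y, |WC y - Wpn y| := by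
    calc ∑ y ∈ S, (WC y - Wpn y)
        ≤ ∑ y ∈ S, (|WC y - Wpn y| + (WC y - Wpn y))/2 :=
          Finset.sum_le_sum fun y _ => by
            have := le_abs_self (WC y - Wpn y); linarith
      _ ≤ ∑ y, (|WC y - Wpn y| + (WC y - Wpn y))/2 :=
          Finset.sum_le_sum_of_subset_of_nonneg (Finset.subset_univ _)
            (fun y _ _ => by have := neg_abs_le (WC y - Wpn y); linarith)
      _ = (1/2) * ∑ y, |WC y - Wpn y| := by
          rw [← Finset.sum_div, Finset.sum_add_distrib, hsum0]; ring
  -- lower bound on WC(S)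
  have hWCS : (1/M : ℝ) * (∑ i ∈ B, ∑ y ∈ TW (c i), Wn (c i) y
      + ∑ i ∈ Bᶜ, ∑ y ∈ D i, Wn (c i) y) ≤ ∑ y ∈ S, WC y := by
    have e1 : ∑ y ∈ S, WC y = (1/M:ℝ) * ∑ i, ∑ y ∈ S, Wn (c i) y := by
      show ∑ y ∈ S, (1 / M : ℝ) * ∑ i, Wn (c i) y = _
      rw [← Finset.mul_sum, Finset.sum_comm]
    rw [e1]
    apply mul_le_mul_of_nonneg_left _ (by positivity)
    rw [← Finset.sum_add_sum_compl B (fun i => ∑ y ∈ S, Wn (c i) y)]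
    apply add_le_add
    · refine Finset.sum_le_sum fun i hi => ?_
      refine Finset.sum_le_sum_of_subset_of_nonneg ?_ (fun y _ _ => hWn0 _ _)
      intro y hy
      rw [hS, Finset.mem_union, hS1]
      exact Or.inl (Finset.mem_biUnion.2 ⟨i, hi, hy⟩)
    · refine Finset.sum_le_sum fun i hi => ?_
      refine Finset.sum_le_sum_of_subset_of_nonneg ?_ (fun y _ _ => hWn0 _ _)
      intro y hy
      rw [hS, Finset.mem_union, hS2]
      exact Or.inr (Finset.mem_biUnion.2 ⟨i, hi, hy⟩)
  -- upper bound on Wpn(S)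
  have hWpnS : ∑ y ∈ S, Wpn y ≤ (∑ y ∈ Tpᶜ, Wpn y) + Real.exp (-α) := by
    have hsub : S ⊆ Tpᶜ ∪ S2 := by
      intro y hy
      rw [hS] at hy
      rcases Finset.mem_union.1 hy with h | h
      · rw [hS1] at h
        rcases Finset.mem_biUnion.1 h with ⟨i, hi, hyi⟩
        exact Finset.mem_union_left _ (hMtoTp i hi y hyi)
      · exact Finset.mem_union_right _ h
    have hS2b : ∑ y ∈ S2, Wpn y ≤ Real.exp (-α) := by
      have perI : ∀ i, ∑ y ∈ D i, Wpn y ≤ Real.exp (-α) / M := by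
        intro i
        have step1 : ∑ y ∈ D i, Wpn y ≤ ∑ y ∈ D i, Real.exp (-α) / M * Wn (c i) y := by
          refine Finset.sum_le_sum fun y hy => ?_
          have hy' : 0 ≤ Wn (c i) y - Real.exp α * M * Wpn y := by
            rw [hD] at hy
            exact (Finset.mem_filter.1 hy).2
          have key : Real.exp (-α)/M * (Real.exp α * M * Wpn y) = Wpn y := by
            rw [Real.exp_neg]
            field_simp
          calc Wpn y = Real.exp (-α)/M * (Real.exp α * M * Wpn y) := key.symm
            _ ≤ Real.exp (-α)/M * Wn (c i) y := by
                apply mul_le_mul_of_nonneg_left (by linarith) (by positivity)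
        have step2 : ∑ y ∈ D i, Real.exp (-α) / M * Wn (c i) y
            ≤ Real.exp (-α) / M := by
          rw [← Finset.mul_sum]
          have : ∑ y ∈ D i, Wn (c i) y ≤ 1 := by
            rw [← hWn1 (c i)]
            exact Finset.sum_le_sum_of_subset_of_nonneg (Finset.subset_univ _)
              (fun y _ _ => hWn0 _ _)
          calc Real.exp (-α)/M * ∑ y ∈ D i, Wn (c i) y
              ≤ Real.exp (-α)/M * 1 := by
                apply mul_le_mul_of_nonneg_left this (by positivity)
            _ = Real.exp (-α)/M := mul_one _
        linarith
      calc ∑ y ∈ S2, Wpn y ≤ ∑ i ∈ Bᶜ, ∑ y ∈ D i, Wpn y := by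
            rw [hS2]; exact sum_biUnion_le_aux _ hWpn0 _ _
        _ ≤ ∑ _i ∈ Bᶜ, Real.exp (-α) / M := Finset.sum_le_sum fun i _ => perI i
        _ ≤ Real.exp (-α) := by
            rw [Finset.sum_const, nsmul_eq_mul]
            have hcard : (Bᶜ.card : ℝ) ≤ M := by
              have := Finset.card_le_univ Bᶜ
              have : Bᶜ.card ≤ M := by simpa using this
              exact_mod_cast this
            calc (Bᶜ.card : ℝ) * (Real.exp (-α) / M) ≤ M * (Real.exp (-α) / M) := by
                  apply mul_le_mul_of_nonneg_right hcard (by positivity)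
              _ = Real.exp (-α) := by field_simp
    calc ∑ y ∈ S, Wpn y ≤ ∑ y ∈ Tpᶜ ∪ S2, Wpn y :=
          Finset.sum_le_sum_of_subset_of_nonneg hsub (fun y _ _ => hWpn0 y)
      _ ≤ ∑ y ∈ Tpᶜ, Wpn y + ∑ y ∈ S2, Wpn y := sum_union_le_aux _ hWpn0 _ _
      _ ≤ ∑ y ∈ Tpᶜ, Wpn y + Real.exp (-α) := by linarith
  -- min bound
  have hmin : ((B.card : ℝ) / M) *
      (if h : B.Nonempty then B.inf' h (fun i => ∑ y ∈ TW (c i), Wn (c i) y) else 0)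
      ≤ (1/M : ℝ) * ∑ i ∈ B, ∑ y ∈ TW (c i), Wn (c i) y := by
    split_ifs with h
    · set m := B.inf' h (fun i => ∑ y ∈ TW (c i), Wn (c i) y) with hm
      have hcm : (B.card : ℝ) * m ≤ ∑ i ∈ B, ∑ y ∈ TW (c i), Wn (c i) y := by
        calc (B.card : ℝ) * m = ∑ _i ∈ B, m := by
              rw [Finset.sum_const, nsmul_eq_mul]
          _ ≤ ∑ i ∈ B, ∑ y ∈ TW (c i), Wn (c i) y :=
              Finset.sum_le_sum fun i hi => Finset.inf'_le _ hi
      have e : ((B.card : ℝ)/M) * m = (1/M : ℝ) * ((B.card : ℝ) * m) := by ring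
      rw [e]
      apply mul_le_mul_of_nonneg_left hcm (by positivity)
    · rw [Finset.not_nonempty_iff_eq_empty] at h
      simp [h]
  -- goal massaging for second term
  have hT2 : (∑ i ∈ Bᶜ, (1 / M : ℝ) *
      ∑ y ∈ univ.filter (fun y => 0 ≤ Wn (c i) y - Real.exp α * M * Wpn y), Wn (c i) y)
      = (1/M : ℝ) * ∑ i ∈ Bᶜ, ∑ y ∈ D i, Wn (c i) y := by
    rw [Finset.mul_sum]
  have hsplit : ∑ y ∈ S, (WC y - Wpn y) = ∑ y ∈ S, WC y - ∑ y ∈ S, Wpn y :=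
    Finset.sum_sub_distrib _ _
  rw [ge_iff_le, hT2]
  have expand : (1/M : ℝ) * (∑ i ∈ B, ∑ y ∈ TW (c i), Wn (c i) y
      + ∑ i ∈ Bᶜ, ∑ y ∈ D i, Wn (c i) y)
      = (1/M : ℝ) * ∑ i ∈ B, ∑ y ∈ TW (c i), Wn (c i) y
      + (1/M : ℝ) * ∑ i ∈ Bᶜ, ∑ y ∈ D i, Wn (c i) y := by ring
  rw [expand] at hWCS
  linarith
end

section
/- For any input distribution q on X with W_q = W_p and any real C > 0 and code size M, there exists a code C_M = {x₁,…,x_M} ⊆ Xⁿ (drawn i.i.d. from q^n in the random-coding argument) such that (1/2)‖W_{C_M} − W_{p}^n‖₁ ≤ Σ_x q^n(x) W_x^n{W_x^n − C·W_p^n ≥ 0} + (1/2)√(C/M). -/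
open Finset

/-- Sum over a function space of a product equals product of sums. -/
private lemma aux_sum_pi {ι Z : Type*} [Fintype ι] [DecidableEq ι] [Fintype Z]
    (G : ι → Z → ℝ) :
    ∑ c : ι → Z, ∏ j, G j (c j) = ∏ j, ∑ z, G j z :=
  (Fintype.prod_sum G).symm

set_option maxHeartbeats 1000000 in
/-- Single-coordinate marginal of an i.i.d. product weight. -/
private lemma aux_marg {ι Z : Type*} [Fintype ι] [DecidableEq ι] [Fintype Z]
    (w : Z → ℝ) (hw : ∑ z, w z = 1) (i : ι) (f : Z → ℝ) :
    ∑ c : ι → Z, (∏ j, w (c j)) * f (c i) = ∑ z, w z * f z := by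
  have h1 : ∀ c : ι → Z,
      (∏ j, w (c j)) * f (c i) = ∏ j, (w (c j) * (if j = i then f (c j) else 1)) := by
    intro c
    rw [Finset.prod_mul_distrib]
    congr 1
    simp [Finset.prod_ite_eq']
  calc ∑ c : ι → Z, (∏ j, w (c j)) * f (c i)
      = ∑ c : ι → Z, ∏ j, (fun j z => w z * (if j = i then f z else 1)) j (c j) := by
        exact Finset.sum_congr rfl fun c _ => h1 c
    _ = ∏ j, ∑ z, w z * (if j = i then f z else 1) :=
        aux_sum_pi (fun j z => w z * (if j = i then f z else 1))
    _ = ∏ j : ι, (if j = i then ∑ z, w z * f z else 1) := by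
        refine Finset.prod_congr rfl fun j _ => ?_
        by_cases hj : j = i <;> simp [hj, hw]
    _ = ∑ z, w z * f z := by simp [Finset.prod_ite_eq']

set_option maxHeartbeats 1000000 in
/-- Two-coordinate marginal of an i.i.d. product weight. -/
private lemma aux_marg2 {ι Z : Type*} [Fintype ι] [DecidableEq ι] [Fintype Z]
    (w : Z → ℝ) (hw : ∑ z, w z = 1) {i j : ι} (hij : i ≠ j) (f g : Z → ℝ) :
    ∑ c : ι → Z, (∏ k, w (c k)) * (f (c i) * g (c j))
      = (∑ z, w z * f z) * (∑ z, w z * g z) := by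
  have h1 : ∀ c : ι → Z,
      (∏ k, w (c k)) * (f (c i) * g (c j))
        = ∏ k, (w (c k) * (if k = i then f (c k) else 1) * (if k = j then g (c k) else 1)) := by
    intro c
    rw [Finset.prod_mul_distrib, Finset.prod_mul_distrib]
    simp [Finset.prod_ite_eq', mul_assoc]
  calc ∑ c : ι → Z, (∏ k, w (c k)) * (f (c i) * g (c j))
      = ∑ c : ι → Z, ∏ k,
          (fun k z => w z * (if k = i then f z else 1) * (if k = j then g z else 1)) k (c k) := by
        exact Finset.sum_congr rfl fun c _ => h1 c
    _ = ∏ k, ∑ z, w z * (if k = i then f z else 1) * (if k = j then g z else 1) :=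
        aux_sum_pi (fun k z => w z * (if k = i then f z else 1) * (if k = j then g z else 1))
    _ = ∏ k : ι, ((if k = i then ∑ z, w z * f z else 1) * (if k = j then ∑ z, w z * g z else 1)) := by
        refine Finset.prod_congr rfl fun k _ => ?_
        by_cases hki : k = i
        · subst hki
          simp [hij, hw]
        · by_cases hkj : k = j <;> simp [hki, hkj, hw, Ne.symm hij]
    _ = (∑ z, w z * f z) * (∑ z, w z * g z) := by
        rw [Finset.prod_mul_distrib]
        simp [Finset.prod_ite_eq']

/-- Weighted Cauchy–Schwarz: `(E|S|)² ≤ E[S²]` for nonnegative weights. -/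
private lemma aux_cs {Z : Type*} [Fintype Z] (P : Z → ℝ) (hP0 : ∀ c, 0 ≤ P c)
    (S : Z → ℝ) :
    (∑ c, P c * |S c|) ^ 2 ≤ (∑ c, P c) * ∑ c, P c * S c ^ 2 := by
  have h := Finset.sum_mul_sq_le_sq_mul_sq univ
    (fun c => Real.sqrt (P c)) (fun c => Real.sqrt (P c) * |S c|)
  have e1 : ∀ c, Real.sqrt (P c) * (Real.sqrt (P c) * |S c|) = P c * |S c| := by
    intro c
    rw [← mul_assoc, Real.mul_self_sqrt (hP0 c)]
  have e2 : ∀ c, Real.sqrt (P c) ^ 2 = P c := fun c => Real.sq_sqrt (hP0 c)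
  have e3 : ∀ c, (Real.sqrt (P c) * |S c|) ^ 2 = P c * S c ^ 2 := by
    intro c
    rw [mul_pow, Real.sq_sqrt (hP0 c), sq_abs]
  calc (∑ c, P c * |S c|) ^ 2
      = (∑ c, Real.sqrt (P c) * (Real.sqrt (P c) * |S c|)) ^ 2 := by
        congr 1; exact Finset.sum_congr rfl fun c _ => (e1 c).symm
    _ ≤ (∑ c, Real.sqrt (P c) ^ 2) * ∑ c, (Real.sqrt (P c) * |S c|) ^ 2 := h
    _ = (∑ c, P c) * ∑ c, P c * S c ^ 2 := by
        congr 1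
        · exact Finset.sum_congr rfl fun c _ => e2 c
        · exact Finset.sum_congr rfl fun c _ => e3 c

/-- Soft-covering achievability: for `q` with `W_q = W_p`, any `C > 0` and
code size `M`, there exists a code `c : Fin M → Xⁿ` with
`(1/2)‖W_C − W_p^n‖₁ ≤ Σ_x q^n(x) W_x^n{W_x^n − C W_p^n ≥ 0} + (1/2)√(C/M)`. -/
theorem stmt_18 {X Y : Type*} [Fintype X] [Fintype Y]
    (W : X → Y → ℝ) (p q : X → ℝ)
    (hW0 : ∀ x y, 0 ≤ W x y) (hW1 : ∀ x, ∑ y, W x y = 1)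
    (hp0 : ∀ x, 0 ≤ p x) (hp1 : ∑ x, p x = 1)
    (hq0 : ∀ x, 0 ≤ q x) (hq1 : ∑ x, q x = 1)
    (heq : ∀ y, ∑ x, q x * W x y = ∑ x, p x * W x y)
    (n M : ℕ) (hn : 0 < n) (hM : 0 < M) (C : ℝ) (hC : 0 < C) :
    let Wp : Y → ℝ := fun y => ∑ x, p x * W x y
    let Wn : (Fin n → X) → (Fin n → Y) → ℝ := fun x y => ∏ k, W (x k) (y k)
    let Wpn : (Fin n → Y) → ℝ := fun y => ∏ k, Wp (y k)
    let qn : (Fin n → X) → ℝ := fun x => ∏ k, q (x k)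
    ∃ c : Fin M → Fin n → X,
      (1 / 2 : ℝ) * ∑ y, |(1 / M : ℝ) * (∑ i, Wn (c i) y) - Wpn y| ≤
        (∑ x : Fin n → X, qn x *
          ∑ y ∈ univ.filter (fun y => 0 ≤ Wn x y - C * Wpn y), Wn x y)
        + (1 / 2 : ℝ) * Real.sqrt (C / M) := by
  classical
  intro Wp Wn Wpn qn
  have hX : Nonempty X := by
    rcases isEmpty_or_nonempty X with hE | hN
    · rw [Finset.univ_eq_empty] at hp1; simp at hp1
    · exact hN
  have hM0 : (0 : ℝ) < (M : ℝ) := by exact_mod_cast hM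
  have hWp0 : ∀ y, 0 ≤ Wp y := fun y =>
    Finset.sum_nonneg fun x _ => mul_nonneg (hp0 x) (hW0 x y)
  have hWn0 : ∀ x y, 0 ≤ Wn x y := fun x y =>
    Finset.prod_nonneg fun k _ => hW0 _ _
  have hWpn0 : ∀ y, 0 ≤ Wpn y := fun y =>
    Finset.prod_nonneg fun k _ => hWp0 _
  have hqn0 : ∀ x, 0 ≤ qn x := fun x =>
    Finset.prod_nonneg fun k _ => hq0 _
  have hqn1 : ∑ x : Fin n → X, qn x = 1 := by
    show ∑ x : Fin n → X, ∏ k, q (x k) = 1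
    rw [aux_sum_pi (fun _ z => q z)]
    simp [hq1]
  have hWp1 : ∑ y, Wp y = 1 := by
    show ∑ y, ∑ x, p x * W x y = 1
    rw [Finset.sum_comm]
    simp_rw [← Finset.mul_sum, hW1, mul_one]
    exact hp1
  have hWpn1 : ∑ y : Fin n → Y, Wpn y = 1 := by
    show ∑ y : Fin n → Y, ∏ k, Wp (y k) = 1
    rw [aux_sum_pi (fun _ z => Wp z)]
    simp [hWp1]
  have hmarg : ∀ y, ∑ x : Fin n → X, qn x * Wn x y = Wpn y := by
    intro y
    show ∑ x : Fin n → X, (∏ k, q (x k)) * ∏ k, W (x k) (y k) = ∏ k, Wp (y k)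
    have e : ∀ x : Fin n → X,
        (∏ k, q (x k)) * ∏ k, W (x k) (y k)
          = ∏ k, (fun k z => q z * W z (y k)) k (x k) := by
      intro x
      rw [← Finset.prod_mul_distrib]
    rw [Finset.sum_congr rfl fun x _ => e x, aux_sum_pi (fun k z => q z * W z (y k))]
    exact Finset.prod_congr rfl fun k _ => heq (y k)
  -- split the channel into "above threshold" and "below threshold" parts
  set g : (Fin n → X) → (Fin n → Y) → ℝ :=
    fun x y => if 0 ≤ Wn x y - C * Wpn y then Wn x y else 0 with hgdef
  set h : (Fin n → X) → (Fin n → Y) → ℝ :=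
    fun x y => if 0 ≤ Wn x y - C * Wpn y then 0 else Wn x y with hhdef
  have hg0 : ∀ x y, 0 ≤ g x y := by
    intro x y; rw [hgdef]; dsimp only; split_ifs
    · exact hWn0 x y
    · exact le_refl 0
  have hh0 : ∀ x y, 0 ≤ h x y := by
    intro x y; rw [hhdef]; dsimp only; split_ifs
    · exact le_refl 0
    · exact hWn0 x y
  have hgh : ∀ x y, g x y + h x y = Wn x y := by
    intro x y; rw [hgdef, hhdef]; dsimp only; split_ifs <;> ring
  have hhC : ∀ x y, h x y ≤ C * Wpn y := by
    intro x y; rw [hhdef]; dsimp only; split_ifs with hcase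
    · exact mul_nonneg hC.le (hWpn0 y)
    · have := not_le.mp hcase; linarith
  set ν : (Fin n → Y) → ℝ := fun y => ∑ x, qn x * g x y with hνdef
  set μ : (Fin n → Y) → ℝ := fun y => ∑ x, qn x * h x y with hμdef
  have hν0 : ∀ y, 0 ≤ ν y := fun y =>
    Finset.sum_nonneg fun x _ => mul_nonneg (hqn0 x) (hg0 x y)
  have hμ0 : ∀ y, 0 ≤ μ y := fun y =>
    Finset.sum_nonneg fun x _ => mul_nonneg (hqn0 x) (hh0 x y)
  have hμν : ∀ y, ν y + μ y = Wpn y := by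
    intro y
    rw [hνdef, hμdef]; dsimp only
    rw [← Finset.sum_add_distrib, ← hmarg y]
    exact Finset.sum_congr rfl fun x _ => by rw [← mul_add, hgh]
  have hμle : ∀ y, μ y ≤ Wpn y := fun y => by
    have := hμν y; have := hν0 y; linarith
  -- the first term of the RHS equals ∑_y ν y
  have hT1 : ∑ y, ν y
      = ∑ x : Fin n → X, qn x *
          ∑ y ∈ univ.filter (fun y => 0 ≤ Wn x y - C * Wpn y), Wn x y := by
    rw [hνdef]; dsimp only
    rw [Finset.sum_comm]
    refine Finset.sum_congr rfl fun x _ => ?_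
    rw [← Finset.mul_sum]
    congr 1
    rw [Finset.sum_filter]
  -- random codebook distribution
  set P : (Fin M → Fin n → X) → ℝ := fun c => ∏ i, qn (c i) with hPdef
  have hP0 : ∀ c, 0 ≤ P c := fun c =>
    Finset.prod_nonneg fun i _ => hqn0 _
  have hP1 : ∑ c : Fin M → Fin n → X, P c = 1 := by
    rw [hPdef]; dsimp only
    rw [aux_sum_pi (fun _ z => qn z)]
    simp [hqn1]
  -- fluctuation term
  set S : (Fin M → Fin n → X) → (Fin n → Y) → ℝ :=
    fun c y => (1 / M : ℝ) * (∑ i, h (c i) y) - μ y with hSdef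
  -- expectation of g-terms
  have hEg : ∀ (y : Fin n → Y) (i : Fin M),
      ∑ c : Fin M → Fin n → X, P c * g (c i) y = ν y := by
    intro y i
    exact aux_marg qn hqn1 i (fun x => g x y)
  -- second moment of the fluctuation
  have hES2 : ∀ y, ∑ c : Fin M → Fin n → X, P c * S c y ^ 2 ≤ C * Wpn y ^ 2 / M := by
    intro y
    set f : (Fin n → X) → ℝ := fun z => h z y - μ y with hfdef
    have hf0 : ∑ z, qn z * f z = 0 := by
      rw [hfdef]; dsimp only
      simp_rw [mul_sub]
      rw [Finset.sum_sub_distrib, ← Finset.sum_mul, hqn1, one_mul]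
      rw [hμdef]; dsimp only; ring
    have hkey : ∀ c : Fin M → Fin n → X, S c y = (1 / M : ℝ) * ∑ i, f (c i) := by
      intro c
      rw [hSdef, hfdef]; dsimp only
      rw [Finset.sum_sub_distrib, Finset.sum_const, card_univ, Fintype.card_fin,
        nsmul_eq_mul, mul_sub]
      field_simp
    have hexp : ∀ c : Fin M → Fin n → X,
        P c * S c y ^ 2
          = (1 / M : ℝ) ^ 2 * ∑ i, ∑ j, P c * (f (c i) * f (c j)) := by
      intro c
      calc P c * S c y ^ 2
          = (1 / M : ℝ) ^ 2 * (P c * ∑ i, ∑ j, f (c i) * f (c j)) := by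
            rw [hkey c, mul_pow, sq (∑ i, f (c i)), Finset.sum_mul_sum]; ring
        _ = (1 / M : ℝ) ^ 2 * ∑ i, ∑ j, P c * (f (c i) * f (c j)) := by
            congr 1
            rw [Finset.mul_sum]
            exact Finset.sum_congr rfl fun i _ => Finset.mul_sum _ _ _
    set m2 : ℝ := ∑ z, qn z * (f z * f z) with hm2def
    have hinner : ∀ i j : Fin M,
        ∑ c : Fin M → Fin n → X, P c * (f (c i) * f (c j))
          = if i = j then m2 else 0 := by
      intro i j
      by_cases hij : i = j
      · subst hij
        simp only [if_pos rfl]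
        exact aux_marg qn hqn1 i (fun z => f z * f z)
      · rw [if_neg hij]
        rw [aux_marg2 qn hqn1 hij f f, hf0, mul_zero]
    have hsum : ∑ c : Fin M → Fin n → X, P c * S c y ^ 2
        = (1 / M : ℝ) ^ 2 * (M * m2) := by
      rw [Finset.sum_congr rfl fun c _ => hexp c, ← Finset.mul_sum]
      congr 1
      rw [Finset.sum_comm]
      calc ∑ i : Fin M, ∑ c : Fin M → Fin n → X, ∑ j : Fin M, P c * (f (c i) * f (c j))
          = ∑ i : Fin M, ∑ j : Fin M, ∑ c : Fin M → Fin n → X, P c * (f (c i) * f (c j)) := by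
            exact Finset.sum_congr rfl fun i _ => Finset.sum_comm
        _ = ∑ i : Fin M, ∑ j : Fin M, if i = j then m2 else 0 := by
            exact Finset.sum_congr rfl fun i _ =>
              Finset.sum_congr rfl fun j _ => hinner i j
        _ = ∑ i : Fin M, m2 := by
            exact Finset.sum_congr rfl fun i _ => by simp
        _ = (M : ℝ) * m2 := by
            rw [Finset.sum_const, card_univ, Fintype.card_fin, nsmul_eq_mul]
    have hm2le : m2 ≤ C * Wpn y ^ 2 := by
      have hstep1 : m2 = (∑ z, qn z * (h z y * h z y)) - μ y ^ 2 := by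
        rw [hm2def]
        have e : ∀ z, qn z * (f z * f z)
            = qn z * (h z y * h z y) - 2 * μ y * (qn z * h z y) + μ y ^ 2 * qn z := by
          intro z; rw [hfdef]; dsimp only; ring
        rw [Finset.sum_congr rfl fun z _ => e z]
        rw [Finset.sum_add_distrib, Finset.sum_sub_distrib, ← Finset.mul_sum,
          ← Finset.mul_sum, hqn1]
        rw [hμdef]; dsimp only; ring
      have hstep2 : (∑ z, qn z * (h z y * h z y)) ≤ C * Wpn y * μ y := by
        have hb : ∀ z, qn z * (h z y * h z y) ≤ qn z * (C * Wpn y * h z y) := by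
          intro z
          exact mul_le_mul_of_nonneg_left
            (mul_le_mul_of_nonneg_right (hhC z y) (hh0 z y)) (hqn0 z)
        calc (∑ z, qn z * (h z y * h z y))
            ≤ ∑ z, qn z * (C * Wpn y * h z y) := Finset.sum_le_sum fun z _ => hb z
          _ = C * Wpn y * μ y := by
              rw [hμdef]; dsimp only
              rw [Finset.mul_sum]
              exact Finset.sum_congr rfl fun z _ => by ring
      have hstep3 : C * Wpn y * μ y ≤ C * Wpn y * Wpn y :=
        mul_le_mul_of_nonneg_left (hμle y) (mul_nonneg hC.le (hWpn0 y))
      nlinarith [sq_nonneg (μ y), sq_nonneg (Wpn y)]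
    rw [hsum]
    calc (1 / M : ℝ) ^ 2 * ((M : ℝ) * m2) = m2 / M := by field_simp
      _ ≤ (C * Wpn y ^ 2) / M := (div_le_div_iff_of_pos_right hM0).mpr hm2le
  -- expected absolute fluctuation
  have hEabs : ∀ y, ∑ c : Fin M → Fin n → X, P c * |S c y|
      ≤ Real.sqrt (C / M) * Wpn y := by
    intro y
    have hcs := aux_cs P hP0 (fun c => S c y)
    rw [hP1, one_mul] at hcs
    have hsq : (∑ c : Fin M → Fin n → X, P c * |S c y|) ^ 2 ≤ C / M * Wpn y ^ 2 := by
      refine hcs.trans ((hES2 y).trans (le_of_eq ?_))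
      ring
    have hnn : 0 ≤ ∑ c : Fin M → Fin n → X, P c * |S c y| :=
      Finset.sum_nonneg fun c _ => mul_nonneg (hP0 c) (abs_nonneg _)
    have := Real.le_sqrt_of_sq_le hsq
    calc ∑ c : Fin M → Fin n → X, P c * |S c y|
        ≤ Real.sqrt (C / M * Wpn y ^ 2) := this
      _ = Real.sqrt (C / M) * Wpn y := by
          rw [Real.sqrt_mul (by positivity), Real.sqrt_sq (hWpn0 y)]
  -- the L1 distance of a codebook
  set D : (Fin M → Fin n → X) → ℝ :=
    fun c => ∑ y, |(1 / M : ℝ) * (∑ i, Wn (c i) y) - Wpn y| with hDdef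
  -- pointwise bound
  have hpoint : ∀ (c : Fin M → Fin n → X) (y : Fin n → Y),
      |(1 / M : ℝ) * (∑ i, Wn (c i) y) - Wpn y|
        ≤ (1 / M : ℝ) * (∑ i, g (c i) y) + ν y + |S c y| := by
    intro c y
    have e : (1 / M : ℝ) * (∑ i, Wn (c i) y) - Wpn y
        = ((1 / M : ℝ) * (∑ i, g (c i) y) - ν y) + S c y := by
      have hWsum : ∑ i, Wn (c i) y = (∑ i, g (c i) y) + ∑ i, h (c i) y := by
        rw [← Finset.sum_add_distrib]
        exact Finset.sum_congr rfl fun i _ => (hgh _ _).symm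
      rw [hSdef]; dsimp only
      rw [hWsum, ← hμν y]; ring
    have hA : |(1 / M : ℝ) * (∑ i, g (c i) y) - ν y|
        ≤ (1 / M : ℝ) * (∑ i, g (c i) y) + ν y := by
      have h1 : (0:ℝ) ≤ (1 / M : ℝ) * (∑ i, g (c i) y) := by
        apply mul_nonneg (by positivity)
        exact Finset.sum_nonneg fun i _ => hg0 _ _
      have h2 := hν0 y
      rw [abs_le]; constructor <;> [linarith; linarith]
    calc |(1 / M : ℝ) * (∑ i, Wn (c i) y) - Wpn y|
        = |((1 / M : ℝ) * (∑ i, g (c i) y) - ν y) + S c y| := by rw [e]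
      _ ≤ |(1 / M : ℝ) * (∑ i, g (c i) y) - ν y| + |S c y| := abs_add_le _ _
      _ ≤ (1 / M : ℝ) * (∑ i, g (c i) y) + ν y + |S c y| := by linarith [hA]
  -- expected L1 distance bound
  have hED : ∑ c : Fin M → Fin n → X, P c * D c
      ≤ 2 * (∑ y, ν y) + Real.sqrt (C / M) := by
    have hswap : ∑ c : Fin M → Fin n → X, P c * D c
        = ∑ y, ∑ c : Fin M → Fin n → X,
            P c * |(1 / M : ℝ) * (∑ i, Wn (c i) y) - Wpn y| := by
      calc ∑ c : Fin M → Fin n → X, P c * D c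
          = ∑ c : Fin M → Fin n → X,
              ∑ y, P c * |(1 / M : ℝ) * (∑ i, Wn (c i) y) - Wpn y| := by
            refine Finset.sum_congr rfl fun c _ => ?_
            rw [hDdef]
            exact Finset.mul_sum _ _ _
        _ = _ := Finset.sum_comm
    rw [hswap]
    have hy : ∀ y, ∑ c : Fin M → Fin n → X,
        P c * |(1 / M : ℝ) * (∑ i, Wn (c i) y) - Wpn y|
          ≤ 2 * ν y + Real.sqrt (C / M) * Wpn y := by
      intro y
      have hb : ∑ c : Fin M → Fin n → X,
          P c * |(1 / M : ℝ) * (∑ i, Wn (c i) y) - Wpn y|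
            ≤ ∑ c : Fin M → Fin n → X,
              P c * ((1 / M : ℝ) * (∑ i, g (c i) y) + ν y + |S c y|) :=
        Finset.sum_le_sum fun c _ =>
          mul_le_mul_of_nonneg_left (hpoint c y) (hP0 c)
      have hEgterm : ∑ c : Fin M → Fin n → X,
          P c * ((1 / M : ℝ) * ∑ i, g (c i) y) = ν y := by
        have e1 : ∀ c : Fin M → Fin n → X,
            P c * ((1 / M : ℝ) * ∑ i, g (c i) y)
              = (1 / M : ℝ) * ∑ i, P c * g (c i) y := by
          intro c
          rw [mul_left_comm]
          congr 1
          exact Finset.mul_sum _ _ _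
        rw [Finset.sum_congr rfl fun c _ => e1 c, ← Finset.mul_sum, Finset.sum_comm]
        rw [Finset.sum_congr rfl fun i (_ : i ∈ univ) => hEg y i]
        rw [Finset.sum_const, card_univ, Fintype.card_fin, nsmul_eq_mul]
        field_simp
      have hsplit : ∑ c : Fin M → Fin n → X,
          P c * ((1 / M : ℝ) * (∑ i, g (c i) y) + ν y + |S c y|)
            = (∑ c : Fin M → Fin n → X, P c * ((1 / M : ℝ) * ∑ i, g (c i) y))
              + ν y + ∑ c : Fin M → Fin n → X, P c * |S c y| := by
        have e2 : ∀ c : Fin M → Fin n → X,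
            P c * ((1 / M : ℝ) * (∑ i, g (c i) y) + ν y + |S c y|)
              = P c * ((1 / M : ℝ) * ∑ i, g (c i) y) + P c * ν y + P c * |S c y| := by
          intro c; ring
        rw [Finset.sum_congr rfl fun c _ => e2 c,
          Finset.sum_add_distrib, Finset.sum_add_distrib, ← Finset.sum_mul, hP1, one_mul]
      calc ∑ c : Fin M → Fin n → X,
          P c * |(1 / M : ℝ) * (∑ i, Wn (c i) y) - Wpn y|
          ≤ (∑ c : Fin M → Fin n → X, P c * ((1 / M : ℝ) * ∑ i, g (c i) y))
              + ν y + ∑ c : Fin M → Fin n → X, P c * |S c y| := by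
            rw [← hsplit]; exact hb
        _ ≤ ν y + ν y + Real.sqrt (C / M) * Wpn y := by
            rw [hEgterm]
            have := hEabs y
            linarith
        _ = 2 * ν y + Real.sqrt (C / M) * Wpn y := by ring
    calc ∑ y, ∑ c : Fin M → Fin n → X,
        P c * |(1 / M : ℝ) * (∑ i, Wn (c i) y) - Wpn y|
        ≤ ∑ y, (2 * ν y + Real.sqrt (C / M) * Wpn y) :=
          Finset.sum_le_sum fun y _ => hy y
      _ = 2 * (∑ y, ν y) + Real.sqrt (C / M) := by
          rw [Finset.sum_add_distrib, ← Finset.mul_sum, ← Finset.mul_sum, hWpn1, mul_one]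
  -- choose a minimizing codebook
  have hne : Nonempty (Fin M → Fin n → X) := ⟨fun _ _ => Classical.choice hX⟩
  obtain ⟨c₀, -, hc₀⟩ :=
    Finset.exists_min_image (univ : Finset (Fin M → Fin n → X)) D Finset.univ_nonempty
  refine ⟨c₀, ?_⟩
  have hmin : D c₀ ≤ ∑ c : Fin M → Fin n → X, P c * D c := by
    calc D c₀ = (∑ c : Fin M → Fin n → X, P c) * D c₀ := by rw [hP1, one_mul]
      _ = ∑ c : Fin M → Fin n → X, P c * D c₀ := Finset.sum_mul _ _ _
      _ ≤ ∑ c : Fin M → Fin n → X, P c * D c :=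
          Finset.sum_le_sum fun c _ =>
            mul_le_mul_of_nonneg_left (hc₀ c (mem_univ c)) (hP0 c)
  have hfinal : D c₀ ≤ 2 * (∑ y, ν y) + Real.sqrt (C / M) := hmin.trans hED
  rw [← hT1]
  have hDc : ∑ y, |(1 / M : ℝ) * (∑ i, Wn (c₀ i) y) - Wpn y| = D c₀ := by
    rw [hDdef]
  rw [hDc]
  linarith
end
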